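/- For b ≥ 2, let φ = (√(b²+4) - b)/2 be the fractional part of the b-th metallic ratio, define Λ(x) = (x·log x - (1-2x)·log(1-2x) - (3x-1)·log(3x-1))/x, and set β = φ/(1 - (b-2)·φ). Then Λ(β) = -φ·log φ - (1-φ)·log(1-φ). -/

import Mathlib

noncomputable def Lam : ℝ → ℝ := fun x =>
  (x * Real.log x - (1 - 2*x) * Real.log (1 - 2*x) - (3*x - 1) * Real.log (3*x - 1)) / x

theorem stmt15 (b : ℕ) (hb : 2 ≤ b) :
    let φ : ℝ := (Real.sqrt ((b : ℝ)^2 + 4) - b) / 2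
    let β : ℝ := φ / (1 - ((b : ℝ) - 2) * φ)
    Lam β = -φ * Real.log φ - (1 - φ) * Real.log (1 - φ) := by
  intro φ β
  have hb' : (2:ℝ) ≤ (b:ℝ) := by exact_mod_cast hb
  set s : ℝ := Real.sqrt ((b : ℝ)^2 + 4) with hsdef
  have hs0 : 0 ≤ s := Real.sqrt_nonneg _
  have hs : s^2 = (b:ℝ)^2 + 4 := Real.sq_sqrt (by positivity)
  have hφeq : φ^2 + (b:ℝ)*φ = 1 := by
    show ((s - b)/2)^2 + (b:ℝ)*((s - b)/2) = 1
    nlinarith [hs]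
  have hφpos : 0 < φ := by
    have hsb : (b:ℝ) < s := by nlinarith [hs, hs0]
    show 0 < (s - b)/2
    linarith
  have hφlt : φ < 1/2 := by
    have : s < (b:ℝ) + 1 := by nlinarith [hs, hs0, hb']
    show (s - b)/2 < 1/2
    linarith
  have h2 : (0:ℝ) < φ + 2 := by linarith
  have hβ : β = 1/(φ + 2) := by
    show φ / (1 - ((b:ℝ) - 2)*φ) = 1/(φ+2)
    have hD : 1 - ((b:ℝ) - 2)*φ = φ*(φ+2) := by nlinarith [hφeq]
    rw [hD]
    field_simp
  have h12 : 1 - 2*β = φ/(φ+2) := by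
    rw [hβ]; field_simp; ring
  have h31 : 3*β - 1 = (1-φ)/(φ+2) := by
    rw [hβ]; field_simp; ring
  have hlogβ : Real.log β = -Real.log (φ+2) := by
    rw [hβ, one_div, Real.log_inv]
  have hlog12 : Real.log (1 - 2*β) = Real.log φ - Real.log (φ+2) := by
    rw [h12, Real.log_div (ne_of_gt hφpos) (ne_of_gt h2)]
  have hlog31 : Real.log (3*β - 1) = Real.log (1-φ) - Real.log (φ+2) := by
    rw [h31, Real.log_div (by linarith : (1:ℝ)-φ ≠ 0) (ne_of_gt h2)]
  have hβne : β ≠ 0 := by rw [hβ]; positivity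
  unfold Lam
  rw [hlogβ, hlog12, hlog31, h12, h31, hβ]
  have h2ne : φ + 2 ≠ 0 := ne_of_gt h2
  field_simp
  ring
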